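/- The mean of f(x) = ||x - x_start||₂ + ||x_goal - x||₂ over a uniform distribution on the prolate hyperspheroid {x ∈ R^n : f(x) < c_i} equals (n·c_i² + c_min²) / ((n+1)·c_i), where c_min = ||x_goal - x_start||₂. -/

import Mathlib

open MeasureTheory

set_option maxHeartbeats 1000000

open Set in
lemma ellipse_real {A B a f y0 S : ℝ} (hA : 0 ≤ A) (hB : 0 ≤ B) (hf : 0 < f) (hfa : f < a)
    (hA2 : A^2 = S - 2*f*y0 + f^2) (hB2 : B^2 = S + 2*f*y0 + f^2) (hS : y0^2 ≤ S) :
    A + B < 2*a ↔ y0^2/a^2 + (S - y0^2)/(a^2 - f^2) < 1 := by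
  have ha : 0 < a := hf.trans hfa
  have hb2 : 0 < a^2 - f^2 := by nlinarith
  set m := a + f/a * y0 with hm_def
  have h4am : 4*a*m = 4*a^2 + 4*f*y0 := by rw [hm_def]; field_simp
  have hid : A^2 - (2*a - B)^2 = 4*a*(B - m) := by nlinarith [h4am]
  have hkey : y0^2*(a^2-f^2) + (S-y0^2)*a^2 - a^2*(a^2-f^2) = a^2*(B^2 - m^2) := by
    rw [hB2, hm_def]; field_simp; ring
  have hQ : (y0^2/a^2 + (S - y0^2)/(a^2 - f^2) < 1) ↔ B^2 < m^2 := by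
    rw [div_add_div _ _ (by positivity) (by positivity), div_lt_one (by positivity)]
    constructor
    · intro h; nlinarith [hkey, sq_nonneg a]
    · intro h; nlinarith [hkey, sq_nonneg a]
  constructor
  · intro h
    have h1 : A < 2*a - B := by linarith
    have h2 : A^2 < (2*a - B)^2 := by nlinarith
    have hBm : B < m := by nlinarith
    exact hQ.mpr (by nlinarith)
  · intro hq
    have hBm2 : B^2 < m^2 := hQ.mp hq
    have hy0 : y0^2 < a^2 := by
      rw [div_add_div _ _ (by positivity) (by positivity), div_lt_one (by positivity)] at hq
      nlinarith [hq, hS, sq_nonneg a]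
    have habs : |y0| < a := abs_lt_of_sq_lt_sq hy0 ha.le
    have hy0a : -a < y0 := (abs_lt.mp habs).1
    have hy0a' : y0 < a := (abs_lt.mp habs).2
    have hfa' : 0 < f/a := by positivity
    have hfay : -(f) < f/a * y0 := by
      have := mul_lt_mul_of_pos_left hy0a hfa'
      rw [mul_neg] at this
      have hfaa : f/a * a = f := by field_simp
      linarith [hfaa ▸ this]
    have hfay' : f/a * y0 < f := by
      have := mul_lt_mul_of_pos_left hy0a' hfa'
      have hfaa : f/a * a = f := by field_simp
      linarith [hfaa ▸ this]
    have hmpos : 0 < m := by rw [hm_def]; linarith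
    have hBm : B < m := by nlinarith
    have h2a : B < 2*a := by rw [hm_def] at hBm; linarith
    have hA2' : A^2 < (2*a - B)^2 := by nlinarith
    have : A < 2*a - B := by nlinarith
    linarith

open Set in
lemma norm_sq_eucl {n : ℕ} (y : EuclideanSpace ℝ (Fin n)) : ‖y‖^2 = ∑ i, (y i)^2 := by
  rw [EuclideanSpace.norm_eq, Real.sq_sqrt (by positivity)]
  simp [Real.norm_eq_abs, sq_abs]

lemma apply_sq_le_norm_sq {n : ℕ} [NeZero n] (y : EuclideanSpace ℝ (Fin n)) :
    (y 0)^2 ≤ ‖y‖^2 := by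
  rw [norm_sq_eucl]
  exact Finset.single_le_sum (f := fun i => (y i)^2) (fun i _ => sq_nonneg _)
    (Finset.mem_univ 0)

lemma mem_ellipse {n : ℕ} [NeZero n] {f a : ℝ} (hf : 0 < f) (hfa : f < a)
    (y : EuclideanSpace ℝ (Fin n)) :
    dist y (-(EuclideanSpace.single (0 : Fin n) f)) +
      dist (EuclideanSpace.single (0 : Fin n) f) y < 2*a ↔
    (y 0)^2/a^2 + (‖y‖^2 - (y 0)^2)/(a^2 - f^2) < 1 := by
  set p : EuclideanSpace ℝ (Fin n) := EuclideanSpace.single (0 : Fin n) f with hp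
  have hinner : (inner ℝ y p : ℝ) = f * y 0 := by
    simp [hp, EuclideanSpace.inner_single_right, mul_comm]
  have hnp : ‖p‖ = f := by
    rw [hp, EuclideanSpace.norm_single, Real.norm_eq_abs, abs_of_pos hf]
  have hd1 : dist y (-p) = ‖y + p‖ := by rw [dist_eq_norm, sub_neg_eq_add]
  have hd2 : dist p y = ‖y - p‖ := by rw [dist_comm, dist_eq_norm]
  rw [hd1, hd2]
  have hA2 : ‖y - p‖^2 = ‖y‖^2 - 2*f*(y 0) + f^2 := by
    rw [norm_sub_sq_real, hinner, hnp]; ring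
  have hB2 : ‖y + p‖^2 = ‖y‖^2 + 2*f*(y 0) + f^2 := by
    rw [norm_add_sq_real, hinner, hnp]; ring
  rw [add_comm (‖y + p‖)]
  exact ellipse_real (norm_nonneg _) (norm_nonneg _) hf hfa hA2 hB2 (apply_sq_le_norm_sq y)


open Set in
noncomputable def Ldiag {n : ℕ} (c : Fin n → ℝ) (hc : ∀ i, c i ≠ 0) :
    EuclideanSpace ℝ (Fin n) ≃ₗ[ℝ] EuclideanSpace ℝ (Fin n) where
  toFun y := WithLp.toLp 2 (fun i => c i * y i)
  invFun y := WithLp.toLp 2 (fun i => y i / c i)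
  map_add' x y := by
    ext i
    simp only [PiLp.add_apply, WithLp.ofLp_toLp]; ring
  map_smul' r x := by
    ext i
    simp only [PiLp.smul_apply, WithLp.ofLp_toLp, smul_eq_mul, RingHom.id_apply]; ring
  left_inv y := by
    ext i
    show c i * y i / c i = y i
    field_simp [hc i]
  right_inv y := by
    ext i
    show c i * (y i / c i) = y i
    field_simp [hc i]

lemma Ldiag_image_ball {n : ℕ} (c : Fin n → ℝ) (hc : ∀ i, c i ≠ 0) :
    ⇑(Ldiag c hc) '' Metric.ball 0 1 = {y : EuclideanSpace ℝ (Fin n) | ∑ i, (y i / c i)^2 < 1} := by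
  rw [LinearEquiv.image_eq_preimage_symm]
  ext y
  simp only [Set.mem_preimage, Metric.mem_ball, dist_zero_right, Set.mem_setOf_eq]
  have h1 : ‖(Ldiag c hc).symm y‖^2 = ∑ i, (y i / c i)^2 := by
    rw [norm_sq_eucl]; rfl
  rw [← pow_lt_one_iff_of_nonneg (norm_nonneg _) two_ne_zero, h1]

lemma Ldiag_det {n : ℕ} (c : Fin n → ℝ) (hc : ∀ i, c i ≠ 0) :
    LinearMap.det ((Ldiag c hc : EuclideanSpace ℝ (Fin n) →ₗ[ℝ] EuclideanSpace ℝ (Fin n))) = ∏ i, c i := by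
  classical
  let b := (EuclideanSpace.basisFun (Fin n) ℝ).toBasis
  rw [← LinearMap.det_toMatrix b]
  have : LinearMap.toMatrix b b (Ldiag c hc : EuclideanSpace ℝ (Fin n) →ₗ[ℝ] EuclideanSpace ℝ (Fin n))
      = Matrix.diagonal c := by
    ext i j
    rw [LinearMap.toMatrix_apply, Matrix.diagonal_apply]
    simp only [b, OrthonormalBasis.coe_toBasis, EuclideanSpace.basisFun_apply,
      OrthonormalBasis.coe_toBasis_repr_apply, EuclideanSpace.basisFun_repr]
    show c i * (EuclideanSpace.single j (1:ℝ)) i = _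
    rw [EuclideanSpace.single_apply]
    by_cases h : i = j <;> simp [h]
  rw [this, Matrix.det_diagonal]

open Set in
lemma volume_ellipsoid {n : ℕ} [NeZero n] {a bb : ℝ} (ha : 0 < a) (hbb : 0 < bb) :
    volume {y : EuclideanSpace ℝ (Fin n) | (y 0)^2/a^2 + (‖y‖^2 - (y 0)^2)/bb^2 < 1}
      = ENNReal.ofReal (a * bb^(n-1)) * volume (Metric.ball (0:EuclideanSpace ℝ (Fin n)) 1) := by
  classical
  set c : Fin n → ℝ := fun i => if i = 0 then a else bb with hc_def
  have hc : ∀ i, c i ≠ 0 := fun i => by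
    by_cases h : i = 0 <;> simp [hc_def, h, ha.ne', hbb.ne']
  have hset : {y : EuclideanSpace ℝ (Fin n) | ∑ i, (y i / c i)^2 < 1}
      = {y : EuclideanSpace ℝ (Fin n) | (y 0)^2/a^2 + (‖y‖^2 - (y 0)^2)/bb^2 < 1} := by
    ext y
    simp only [Set.mem_setOf_eq]
    have hsplit : ∑ i, (y i / c i)^2
        = (y 0)^2/a^2 + (∑ i ∈ Finset.univ.erase 0, (y i)^2)/bb^2 := by
      rw [← Finset.add_sum_erase _ _ (Finset.mem_univ (0 : Fin n))]
      congr 1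
      · simp [hc_def, div_pow]
      · rw [Finset.sum_div]
        refine Finset.sum_congr rfl fun i hi => ?_
        have : c i = bb := by simp [hc_def, Finset.ne_of_mem_erase hi]
        rw [this, div_pow]
    have hnorm : ‖y‖^2 - (y 0)^2 = ∑ i ∈ Finset.univ.erase 0, (y i)^2 := by
      rw [norm_sq_eucl, ← Finset.add_sum_erase _ _ (Finset.mem_univ (0 : Fin n))]; ring
    rw [hsplit, hnorm]
  rw [← hset, ← Ldiag_image_ball c hc,
    show ⇑(Ldiag c hc) = ⇑((Ldiag c hc : EuclideanSpace ℝ (Fin n) →ₗ[ℝ] EuclideanSpace ℝ (Fin n))) from rfl,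
    Measure.addHaar_image_linearMap, Ldiag_det c hc]
  have hprod : ∏ i, c i = a * bb^(n-1) := by
    rw [← Finset.mul_prod_erase _ _ (Finset.mem_univ (0 : Fin n))]
    have h1 : c 0 = a := by simp [hc_def]
    have h2 : ∏ i ∈ Finset.univ.erase 0, c i = bb^(n-1) := by
      rw [Finset.prod_congr rfl (fun i hi => show c i = bb by
        simp [hc_def, Finset.ne_of_mem_erase hi]), Finset.prod_const,
        Finset.card_erase_of_mem (Finset.mem_univ _), Finset.card_univ, Fintype.card_fin]
    rw [h1, h2]
  rw [hprod, abs_of_pos (by positivity)]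

open Set in
lemma volume_phs {n : ℕ} (hn : 2 ≤ n) (xs xg : EuclideanSpace ℝ (Fin n)) (hne : xs ≠ xg) :
    ∀ c : ℝ, dist xg xs < c →
      volume {x : EuclideanSpace ℝ (Fin n) | dist x xs + dist xg x < c}
        = ENNReal.ofReal ((c/2) * (Real.sqrt (c^2 - (dist xg xs)^2)/2)^(n-1))
            * volume (Metric.ball (0:EuclideanSpace ℝ (Fin n)) 1) := by
  haveI : NeZero n := ⟨by omega⟩
  set cmin := dist xg xs with hcmin_def
  have hcmin : 0 < cmin := dist_pos.mpr (Ne.symm hne)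
  -- unit vector and orthonormal basis
  set u : EuclideanSpace ℝ (Fin n) := cmin⁻¹ • (xg - xs) with hu_def
  have hu_norm : ‖u‖ = 1 := by
    have hd : ‖xg - xs‖ = cmin := by rw [← dist_eq_norm]
    rw [hu_def, norm_smul, hd, Real.norm_eq_abs, abs_of_pos (by positivity),
      inv_mul_cancel₀ hcmin.ne']
  obtain ⟨b, hb⟩ : ∃ b : OrthonormalBasis (Fin n) ℝ (EuclideanSpace ℝ (Fin n)),
      ∀ i ∈ ({0} : Set (Fin n)), b i = u := by
    apply Orthonormal.exists_orthonormalBasis_extension_of_card_eq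
        (v := fun _ => u) (s := ({0} : Set (Fin n)))
    · rw [finrank_euclideanSpace_fin, Fintype.card_fin]
    · constructor
      · intro i; simpa using hu_norm
      · intro i j hij
        exact absurd (Subtype.ext ((i.2 : (i:Fin n) ∈ ({0}:Set (Fin n)))
          |>.trans (j.2 : (j:Fin n) ∈ ({0}:Set (Fin n))).symm)) hij
  have hb0 : b 0 = u := hb 0 rfl
  set m : EuclideanSpace ℝ (Fin n) := (2:ℝ)⁻¹ • (xs + xg) with hm_def
  set F : EuclideanSpace ℝ (Fin n) → EuclideanSpace ℝ (Fin n) := fun x => b.repr (x - m)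
    with hF_def
  have hF_meas : MeasurePreserving F volume volume :=
    b.measurePreserving_repr.comp (measurePreserving_sub_right volume m)
  have hxgxs : xg - xs = cmin • u := by
    rw [hu_def, smul_smul, mul_inv_cancel₀ hcmin.ne', one_smul]
  have hsingle : ∀ t : ℝ, t • EuclideanSpace.single (0:Fin n) (1:ℝ)
      = EuclideanSpace.single (0:Fin n) t := by
    intro t
    ext i
    simp only [PiLp.smul_apply, smul_eq_mul, EuclideanSpace.single_apply]
    by_cases h : i = 0 <;> simp [h]
  set p : EuclideanSpace ℝ (Fin n) := EuclideanSpace.single (0:Fin n) (cmin/2) with hp_def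
  have hrepru : b.repr u = EuclideanSpace.single 0 1 := by
    rw [← hb0]; exact b.repr_self 0
  have hhalf : (cmin/2) • u = (2:ℝ)⁻¹ • (xg - xs) := by
    rw [div_eq_mul_inv, mul_comm, ← smul_smul, ← hxgxs]
  have hFxs : F xs = -p := by
    have h1 : xs - m = -((cmin/2) • u) := by
      rw [hhalf, hm_def]
      module
    rw [hF_def]
    simp only [h1, map_neg, _root_.map_smul]
    rw [hrepru, hsingle, hp_def]
  have hFxg : F xg = p := by
    have h1 : xg - m = (cmin/2) • u := by
      rw [hhalf, hm_def]
      module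
    rw [hF_def]
    simp only [h1, _root_.map_smul]
    rw [hrepru, hsingle, hp_def]
  have hdist : ∀ x y : EuclideanSpace ℝ (Fin n), dist (F x) (F y) = dist x y := by
    intro x y
    rw [hF_def]
    simp only
    rw [b.repr.dist_map, dist_sub_right]
  intro c hc
  have hset : {x : EuclideanSpace ℝ (Fin n) | dist x xs + dist xg x < c}
      = F ⁻¹' {y : EuclideanSpace ℝ (Fin n) | dist y (-p) + dist p y < c} := by
    ext x
    simp only [Set.mem_setOf_eq, Set.mem_preimage]
    rw [← hFxs, ← hFxg, hdist x xs, hdist xg x]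
  have hSopen : IsOpen {y : EuclideanSpace ℝ (Fin n) | dist y (-p) + dist p y < c} :=
    isOpen_lt (by fun_prop) continuous_const
  rw [hset, hF_meas.measure_preimage hSopen.measurableSet.nullMeasurableSet]
  -- now identify with ellipsoid
  have hf2 : 0 < cmin/2 := by positivity
  have hfa2 : cmin/2 < c/2 := by linarith
  have hc2 : (0:ℝ) < c := lt_trans hcmin hc
  have hbbpos : 0 < Real.sqrt (c^2 - cmin^2)/2 := by
    have : (0:ℝ) < c^2 - cmin^2 := by nlinarith
    positivity
  have hbbsq : (Real.sqrt (c^2 - cmin^2)/2)^2 = (c/2)^2 - (cmin/2)^2 := by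
    rw [div_pow, Real.sq_sqrt (by nlinarith)]
    ring
  have hset2 : {y : EuclideanSpace ℝ (Fin n) | dist y (-p) + dist p y < c}
      = {y : EuclideanSpace ℝ (Fin n) |
          (y 0)^2/(c/2)^2 + (‖y‖^2 - (y 0)^2)/((Real.sqrt (c^2 - cmin^2)/2))^2 < 1} := by
    ext y
    simp only [Set.mem_setOf_eq]
    rw [hbbsq, hp_def, ← mem_ellipse hf2 hfa2 y]
    constructor <;> intro h <;> (first | linarith | (convert h using 2; ring))
  rw [hset2, volume_ellipsoid (by positivity) hbbpos]

open Set in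
/-- The mean of `f(x) = ‖x - x_start‖ + ‖x_goal - x‖` over the uniform distribution on the
prolate hyperspheroid `{x | f(x) < c_i}` equals `(n c_i² + c_min²)/((n+1) c_i)`. -/
theorem phs_mean_cost (n : ℕ) (hn : 2 ≤ n) (xs xg : EuclideanSpace ℝ (Fin n))
    (hne : xs ≠ xg) (ci : ℝ) (hci : dist xg xs < ci) :
    (∫ x in {x : EuclideanSpace ℝ (Fin n) | dist x xs + dist xg x < ci},
        (dist x xs + dist xg x)) /
      (volume {x : EuclideanSpace ℝ (Fin n) | dist x xs + dist xg x < ci}).toReal =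
      ((n : ℝ) * ci ^ 2 + (dist xg xs) ^ 2) / (((n : ℝ) + 1) * ci) := by
  haveI : NeZero n := ⟨by omega⟩
  set cmin := dist xg xs with hcmin_def
  have hcmin : 0 < cmin := dist_pos.mpr (Ne.symm hne)
  have hcipos : 0 < ci := lt_trans hcmin hci
  set g : EuclideanSpace ℝ (Fin n) → ℝ := fun x => dist x xs + dist xg x with hg_def
  have hg_cont : Continuous g := by fun_prop
  have hg_nonneg : ∀ x, 0 ≤ g x := fun x => by positivity
  have hg_ge : ∀ x, cmin ≤ g x := fun x => by
    have h := dist_triangle xg x xs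
    have h2 : dist x xs = dist xs x := dist_comm x xs
    simp only [hg_def, hcmin_def]
    linarith [dist_comm xs x ▸ h]
  set κ := volume (Metric.ball (0:EuclideanSpace ℝ (Fin n)) 1) with hκ_def
  have hκtop : κ ≠ ⊤ := measure_ball_lt_top.ne
  have hκ0 : κ ≠ 0 := (Metric.measure_ball_pos volume 0 one_pos).ne'
  set K := κ.toReal with hK_def
  have hKpos : 0 < K := ENNReal.toReal_pos hκ0 hκtop
  set Bv : ℝ → ℝ := fun t => (t/2) * (Real.sqrt (t^2 - cmin^2)/2)^(n-1) with hBv_def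
  have hBv_cont : Continuous Bv := by
    apply Continuous.mul (by fun_prop)
    exact ((Real.continuous_sqrt.comp (by fun_prop)).div_const 2).pow _
  have hBv_nonneg : ∀ t, 0 ≤ t → 0 ≤ Bv t := fun t ht => by
    simp only [hBv_def]; positivity
  have hvol : ∀ t, cmin < t → volume {x | g x < t} = ENNReal.ofReal (Bv t) * κ :=
    fun t ht => volume_phs hn xs xg hne t ht
  have hvol_le : ∀ t, cmin < t → volume {x | g x ≤ t} = ENNReal.ofReal (Bv t) * κ := by
    intro t ht
    refine le_antisymm ?_ ?_
    · have htend : Filter.Tendsto (fun t' => ENNReal.ofReal (Bv t') * κ)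
          (nhdsWithin t (Ioi t)) (nhds (ENNReal.ofReal (Bv t) * κ)) := by
        apply ENNReal.Tendsto.mul_const
        · exact ((ENNReal.continuous_ofReal.comp hBv_cont).tendsto t).mono_left
            nhdsWithin_le_nhds
        · exact Or.inr hκtop
      refine ge_of_tendsto htend ?_
      filter_upwards [self_mem_nhdsWithin] with t' ht'
      rw [← hvol t' (ht.trans ht')]
      exact measure_mono fun x (hx : g x ≤ t) => (lt_of_le_of_lt hx ht' : g x < t')
    · rw [← hvol t ht]
      exact measure_mono (setOf_subset_setOf.mpr fun x hx => hx.le)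
  set E := {x : EuclideanSpace ℝ (Fin n) | g x < ci} with hE_def
  have hEmeas : MeasurableSet E := (isOpen_lt hg_cont continuous_const).measurableSet
  have hEvol : volume E = ENNReal.ofReal (Bv ci) * κ := hvol ci hci
  have hEfin : volume E ≠ ⊤ := by
    rw [hEvol]; exact ENNReal.mul_ne_top ENNReal.ofReal_ne_top hκtop
  haveI : IsFiniteMeasure (volume.restrict E) :=
    ⟨by rw [Measure.restrict_apply_univ]; exact hEfin.lt_top⟩
  have hD2 : (0:ℝ) < ci^2 - cmin^2 := by nlinarith
  set D := Real.sqrt (ci^2 - cmin^2) with hD_def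
  have hDpos : 0 < D := Real.sqrt_pos.mpr hD2
  have hDsq : D^2 = ci^2 - cmin^2 := Real.sq_sqrt hD2.le
  have hBvci : Bv ci = ci * D^(n-1) / 2^n := by
    simp only [hBv_def, ← hD_def, div_pow]
    rw [show (2:ℝ)^n = 2^(n-1)*2 by rw [← pow_succ, Nat.sub_add_cancel (by omega)]]
    ring
  have hBvci_pos : 0 < Bv ci := by rw [hBvci]; positivity
  have hBvcmin : Bv cmin = 0 := by
    simp only [hBv_def]
    rw [show cmin^2 - cmin^2 = 0 by ring, Real.sqrt_zero, zero_div,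
      zero_pow (by omega), mul_zero]
  -- integrability of g on E
  have hint : Integrable g (volume.restrict E) := by
    refine ⟨hg_cont.aestronglyMeasurable, HasFiniteIntegral.of_bounded (C := ci) ?_⟩
    rw [ae_restrict_iff' hEmeas]
    exact Filter.Eventually.of_forall fun x hx => by
      rw [Real.norm_eq_abs, abs_of_nonneg (hg_nonneg x)]; exact le_of_lt hx
  have hlc := hint.integral_eq_integral_meas_lt
    (Filter.Eventually.of_forall fun x => hg_nonneg x)
  set φ : ℝ → ℝ := fun t => if t < cmin then K * Bv ci else
      if t < ci then K * Bv ci - K * Bv t else 0 with hφ_def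
  have htail : ∀ t : ℝ, t ≠ cmin → t ≠ ci →
      ((volume.restrict E) {a | t < g a}).toReal = φ t := by
    intro t htc htci
    rw [Measure.restrict_apply (measurableSet_lt measurable_const hg_cont.measurable)]
    rcases lt_trichotomy t cmin with h | h | h
    · have hseteq : {a | t < g a} ∩ E = E :=
        inter_eq_self_of_subset_right fun x _ => lt_of_lt_of_le h (hg_ge x)
      rw [hseteq, hEvol, hφ_def]
      simp only [if_pos h]
      rw [ENNReal.toReal_mul, ENNReal.toReal_ofReal (hBv_nonneg ci hcipos.le)]
      ring
    · exact absurd h htc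
    · rcases lt_trichotomy t ci with h2 | h2 | h2
      · have hsub : {x | g x ≤ t} ⊆ E := fun x hx => lt_of_le_of_lt hx h2
        have hseteq : {a | t < g a} ∩ E = E \ {x | g x ≤ t} := by
          ext x
          simp only [mem_inter_iff, mem_setOf_eq, mem_diff, hE_def, not_le]
          tauto
        have hmeas_le : MeasurableSet {x | g x ≤ t} :=
          measurableSet_le hg_cont.measurable measurable_const
        have hfin_le : volume {x | g x ≤ t} ≠ ⊤ :=
          ((measure_mono hsub).trans_lt hEfin.lt_top).ne
        have hle : ENNReal.ofReal (Bv t) * κ ≤ ENNReal.ofReal (Bv ci) * κ := by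
          rw [← hvol_le t h, ← hEvol]
          exact measure_mono hsub
        rw [hseteq, measure_diff hsub hmeas_le.nullMeasurableSet hfin_le,
          hEvol, hvol_le t h,
          ENNReal.toReal_sub_of_le hle (ENNReal.mul_ne_top ENNReal.ofReal_ne_top hκtop),
          ENNReal.toReal_mul, ENNReal.toReal_mul,
          ENNReal.toReal_ofReal (hBv_nonneg ci hcipos.le),
          ENNReal.toReal_ofReal (hBv_nonneg t (lt_trans hcmin h).le), hφ_def]
        simp only [if_neg (not_lt.mpr (le_of_lt h)), if_pos h2]
        ring
      · exact absurd h2 htci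
      · have hseteq : {a | t < g a} ∩ E = ∅ := by
          ext x
          simp only [mem_inter_iff, mem_setOf_eq, hE_def, mem_empty_iff_false, iff_false,
            not_and]
          intro h3
          linarith
        rw [hseteq, measure_empty, hφ_def]
        simp only [if_neg (not_lt.mpr (le_of_lt h)),
          if_neg (not_lt.mpr (le_of_lt h2)), ENNReal.toReal_zero]
  have hcongr : ∫ t in Ioi (0:ℝ), ((volume.restrict E) {a | t < g a}).toReal
      = ∫ t in Ioi (0:ℝ), φ t := by
    apply integral_congr_ae
    have hnull : ∀ᵐ t : ℝ, t ≠ cmin ∧ t ≠ ci := by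
      rw [Filter.eventually_iff, mem_ae_iff]
      have hfin : volume ({cmin, ci} : Set ℝ) = 0 :=
        ((Set.finite_singleton ci).insert cmin).measure_zero _
      refine measure_mono_null (fun t ht => ?_) hfin
      simp only [mem_compl_iff, mem_setOf_eq, not_and_or, not_not] at ht
      rcases ht with h | h <;> simp [h]
    exact ae_restrict_of_ae (hnull.mono fun t ht => htail t ht.1 ht.2)
  -- FTC
  have hFTC : ∫ t in cmin..ci, Bv t = D^(n+1) / (((n:ℝ)+1) * 2^n) := by
    have hderiv : ∀ x ∈ Ioo cmin ci,
        HasDerivWithinAt (fun t => (Real.sqrt (t^2 - cmin^2))^(n+1) / (((n:ℝ)+1) * 2^n))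
          (Bv x) (Ioi x) x := by
      intro x hx
      have hx2 : 0 < x^2 - cmin^2 := by nlinarith [hx.1, hx.2]
      set s := Real.sqrt (x^2 - cmin^2) with hs_def
      have hspos : 0 < s := Real.sqrt_pos.mpr hx2
      have h1 : HasDerivAt (fun t : ℝ => t^2 - cmin^2) (2*x) x := by
        simpa using (hasDerivAt_pow 2 x).sub_const (cmin^2)
      have h3 : HasDerivAt (fun t => Real.sqrt (t^2 - cmin^2)) (1/(2*s) * (2*x)) x :=
        (Real.hasDerivAt_sqrt hx2.ne').comp x h1
      have h4 := (h3.pow (n+1)).div_const (((n:ℝ)+1) * 2^n)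
      have heq : ((↑(n+1) : ℝ) * s ^ (n+1-1) * (1/(2*s) * (2*x)))
          / (((n:ℝ)+1) * 2^n) = Bv x := by
        simp only [Nat.add_sub_cancel, hBv_def]
        rw [← hs_def]
        have hsn : s^n = s^(n-1) * s := by
          rw [← pow_succ, Nat.sub_add_cancel (by omega)]
        have h2n : (2:ℝ)^n = 2^(n-1) * 2 := by
          rw [← pow_succ, Nat.sub_add_cancel (by omega)]
        rw [hsn, h2n, div_pow]
        push_cast
        have hn1 : ((n:ℝ)+1) ≠ 0 := by positivity
        field_simp
      rw [heq] at h4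
      exact h4.hasDerivWithinAt
    have hcont : ContinuousOn (fun t => (Real.sqrt (t^2 - cmin^2))^(n+1) / (((n:ℝ)+1) * 2^n))
        (Icc cmin ci) :=
      (((Real.continuous_sqrt.comp (by fun_prop)).pow _).div_const _).continuousOn
    rw [intervalIntegral.integral_eq_sub_of_hasDeriv_right_of_le hci.le hcont hderiv
      (hBv_cont.intervalIntegrable cmin ci)]
    rw [show cmin^2 - cmin^2 = 0 by ring, Real.sqrt_zero, zero_pow (by omega), ← hD_def]
    ring
  -- splitting the φ integral
  have hφ_eq1 : EqOn φ (fun _ => K * Bv ci) (Ioc 0 cmin) := by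
    intro t ht
    simp only [hφ_def]
    rcases lt_or_eq_of_le ht.2 with h | h
    · rw [if_pos h]
    · subst h
      rw [if_neg (lt_irrefl _), if_pos hci, hBvcmin, mul_zero, sub_zero]
  have hφ_eq2 : EqOn φ (fun t => K * Bv ci - K * Bv t) (Ioc cmin ci) := by
    intro t ht
    simp only [hφ_def]
    rw [if_neg (not_lt.mpr ht.1.le)]
    rcases lt_or_eq_of_le ht.2 with h | h
    · rw [if_pos h]
    · subst h
      rw [if_neg (lt_irrefl _), sub_self]
  have hφ_eq3 : EqOn φ (fun _ => (0:ℝ)) (Ioi ci) := by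
    intro t ht
    simp only [hφ_def]
    rw [if_neg (not_lt.mpr (le_of_lt (lt_trans hci ht))),
      if_neg (not_lt.mpr (le_of_lt ht))]
  have hI1 : IntegrableOn φ (Ioc 0 cmin) volume :=
    (integrableOn_const (C := K * Bv ci) measure_Ioc_lt_top.ne).congr_fun hφ_eq1.symm
      measurableSet_Ioc
  have hI2 : IntegrableOn φ (Ioc cmin ci) volume :=
    ((continuous_const.sub (continuous_const.mul hBv_cont)).integrableOn_Ioc).congr_fun
      hφ_eq2.symm measurableSet_Ioc
  have hI3 : IntegrableOn φ (Ioi ci) volume :=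
    (integrableOn_zero).congr_fun hφ_eq3.symm measurableSet_Ioi
  have e2 : Ioc (0:ℝ) ci = Ioc 0 cmin ∪ Ioc cmin ci :=
    (Ioc_union_Ioc_eq_Ioc hcmin.le hci.le).symm
  have hI12 : IntegrableOn φ (Ioc 0 ci) volume := by
    rw [e2]; exact hI1.union hI2
  have hsplit : ∫ t in Ioi (0:ℝ), φ t
      = ((∫ t in Ioc 0 cmin, φ t) + ∫ t in Ioc cmin ci, φ t) + ∫ t in Ioi ci, φ t := by
    rw [show Ioi (0:ℝ) = Ioc 0 ci ∪ Ioi ci from (Ioc_union_Ioi_eq_Ioi hcipos.le).symm,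
      setIntegral_union (Ioc_disjoint_Ioi le_rfl) measurableSet_Ioi hI12 hI3, e2,
      setIntegral_union (Ioc_disjoint_Ioc_of_le le_rfl) measurableSet_Ioc hI1 hI2]
  have hval1 : ∫ t in Ioc (0:ℝ) cmin, φ t = cmin * (K * Bv ci) := by
    rw [setIntegral_congr_fun measurableSet_Ioc hφ_eq1, setIntegral_const, Real.volume_real_Ioc_of_le hcmin.le,
      sub_zero, smul_eq_mul]
  have hval3 : ∫ t in Ioi ci, φ t = 0 := by
    rw [setIntegral_congr_fun measurableSet_Ioi hφ_eq3, integral_zero]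
  have hval2 : ∫ t in Ioc cmin ci, φ t
      = (ci - cmin) * (K * Bv ci) - K * (D^(n+1) / (((n:ℝ)+1) * 2^n)) := by
    rw [setIntegral_congr_fun measurableSet_Ioc hφ_eq2,
      ← intervalIntegral.integral_of_le hci.le,
      intervalIntegral.integral_sub (intervalIntegrable_const)
        (by exact (continuous_const.mul hBv_cont).intervalIntegrable _ _ :
          IntervalIntegrable (fun t => K * Bv t) volume cmin ci),
      intervalIntegral.integral_const, intervalIntegral.integral_const_mul, hFTC,
      smul_eq_mul]
  -- put it together
  rw [hlc, show ∫ t in Ioi (0:ℝ), (volume.restrict E).real {a | t < g a} = ∫ t in Ioi (0:ℝ), φ t from hcongr, hsplit]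
  rw [hval1, hval2, hval3, hEvol, ENNReal.toReal_mul,
    ENNReal.toReal_ofReal (hBv_nonneg ci hcipos.le), ← hK_def]
  have hDn1 : D^(n+1) = D^(n-1) * D^2 := by
    rw [← pow_add]; congr 1; omega
  rw [hDn1, hDsq, hBvci]
  have h2n : ((2:ℝ)^n) ≠ 0 := by positivity
  have hP : D^(n-1) ≠ 0 := pow_ne_zero _ hDpos.ne'
  have hn1 : ((n:ℝ)+1) ≠ 0 := by positivity
  field_simp
  ring
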